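/- Let d ≥ 1, α ∈ (0, 2), p ∈ [0, α), and q ∈ [0, α). Define W(x,y) = ((1+|x|)^p + (1+|y|)^p) for |x-y| < 1 and ((1+|x|)^q + (1+|y|)^q) for |x-y| ≥ 1, and J(x, dy) = |x-y|^{-d-α} dy. Then there is a constant c > 0 such that for all l ≥ 1, ∫_{|x| ≤ l} ∫_{ℝ^d} (1 ∧ (|x-y|²/l²)) W(x,y) |x-y|^{-d-α} dy dx ≤ c (l^d + l^{d+p-α}). In particular, since p < α, liminf_{l→∞} l^{-d} ∫_{|x| ≤ l} ∫ (1 ∧ |x-y|²/l²) W(x,y) J(x,dy) dx < ∞. -/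

import Mathlib

open MeasureTheory Metric Real Set

section Aux

variable {E : Type*} [NormedAddCommGroup E] [NormedSpace ℝ E] [MeasurableSpace E]
  [BorelSpace E] [FiniteDimensional ℝ E]

lemma aux_ball (μ : Measure E) [μ.IsAddHaarMeasure] (d : ℕ) (hd : 1 ≤ d)
    (hE : Module.finrank ℝ E = d) {s : ℝ} (hs : -(d:ℝ) < s) :
    IntegrableOn (fun w : E => ‖w‖ ^ s) (ball 0 1) μ := by
  have hnt : Nontrivial E := by
    refine Module.nontrivial_of_finrank_pos (R := ℝ) (M := E) ?_
    rw [hE]; exact hd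
  set f : E → ℝ := fun w => ‖w‖ ^ s with hf
  set A : ℕ → Set E := fun i => {w | (2:ℝ) ^ (-(i:ℝ)-1) ≤ ‖w‖ ∧ ‖w‖ < 2 ^ (-(i:ℝ))} with hA
  set M : ℕ → ℝ := fun i => (2:ℝ) ^ (-(i:ℝ)*s) * 2 ^ |s| with hM
  have hmeas : ∀ i, MeasurableSet (A i) := by
    intro i
    have : A i = (fun w : E => ‖w‖) ⁻¹' (Ico ((2:ℝ) ^ (-(i:ℝ)-1)) (2 ^ (-(i:ℝ)))) := rfl
    rw [this]
    exact measurableSet_Ico.preimage measurable_norm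
  have hfm : AEStronglyMeasurable f μ :=
    (measurable_norm.pow_const s |>.aestronglyMeasurable)
  have hsub : ∀ i, A i ⊆ ball (0:E) ((2:ℝ) ^ (-(i:ℝ))) := by
    intro i w hw
    simpa [mem_ball_zero_iff] using hw.2
  have hAfin : ∀ i, μ (A i) ≠ ⊤ :=
    fun i => ((measure_mono (hsub i)).trans_lt measure_ball_lt_top).ne
  have hbound : ∀ i, ∀ w ∈ A i, ‖f w‖ ≤ M i := by
    intro i w hw
    have h1 : (0:ℝ) < 2 ^ (-(i:ℝ)-1) := rpow_pos_of_pos two_pos _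
    rw [hf, Real.norm_of_nonneg (rpow_nonneg (norm_nonneg w) s)]
    rcases le_or_gt 0 s with hs0 | hs0
    · calc ‖w‖ ^ s ≤ ((2:ℝ) ^ (-(i:ℝ))) ^ s :=
            rpow_le_rpow (norm_nonneg w) hw.2.le hs0
      _ = (2:ℝ) ^ (-(i:ℝ)*s) := by rw [← Real.rpow_mul (by norm_num)]
      _ ≤ M i := le_mul_of_one_le_right (rpow_nonneg (by norm_num) _)
            (Real.one_le_rpow one_le_two (abs_nonneg s))
    · calc ‖w‖ ^ s ≤ ((2:ℝ) ^ (-(i:ℝ)-1)) ^ s :=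
            rpow_le_rpow_of_nonpos h1 hw.1 hs0.le
      _ = (2:ℝ) ^ ((-(i:ℝ)-1)*s) := by rw [← Real.rpow_mul (by norm_num)]
      _ = M i := by
          simp only [hM]
          rw [← Real.rpow_add two_pos]
          congr 1
          rw [abs_of_neg hs0]; ring
  have hint : ∀ i, IntegrableOn f (A i) μ := by
    intro i
    refine Measure.integrableOn_of_bounded (M := M i) (hAfin i) hfm ?_
    filter_upwards [ae_restrict_mem (hmeas i)] with w hw using hbound i w hw
  have hQ : ∀ i, ∫ w in A i, ‖f w‖ ∂μ ≤ M i * (μ (A i)).toReal := by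
    intro i
    have := norm_setIntegral_le_of_norm_le_const (μ := μ)
      (s := A i) (f := fun w => ‖f w‖) ((hAfin i).lt_top)
      (fun w hw => by rw [norm_norm]; exact hbound i w hw)
    exact (le_abs_self _).trans (by simpa [Real.norm_eq_abs, measureReal_def] using this)
  set V : ℝ := (μ (ball (0:E) 1)).toReal with hV
  have hV0 : 0 ≤ V := ENNReal.toReal_nonneg
  have hvol : ∀ i, (μ (A i)).toReal ≤ (2:ℝ) ^ (-(i:ℝ)*(d:ℝ)) * V := by
    intro i
    have h2 : (0:ℝ) ≤ 2 ^ (-(i:ℝ)) := (rpow_pos_of_pos two_pos _).le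
    have hmono := measure_mono (μ := μ) (hsub i)
    have hball : μ (ball (0:E) ((2:ℝ) ^ (-(i:ℝ))))
        = ENNReal.ofReal (((2:ℝ) ^ (-(i:ℝ))) ^ d) * μ (ball (0:E) 1) := by
      rw [Measure.addHaar_ball μ _ h2, hE]
    have hfin2 : μ (ball (0:E) ((2:ℝ) ^ (-(i:ℝ)))) ≠ ⊤ := measure_ball_lt_top.ne
    calc (μ (A i)).toReal ≤ (μ (ball (0:E) ((2:ℝ) ^ (-(i:ℝ))))).toReal :=
          ENNReal.toReal_mono hfin2 hmono
      _ = ((2:ℝ) ^ (-(i:ℝ))) ^ d * V := by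
          rw [hball, ENNReal.toReal_mul, ENNReal.toReal_ofReal (by positivity), hV]
      _ = (2:ℝ) ^ (-(i:ℝ)*(d:ℝ)) * V := by
          rw [← Real.rpow_natCast ((2:ℝ) ^ (-(i:ℝ))) d, ← Real.rpow_mul (by norm_num)]
  have hsummable : Summable fun i : ℕ => ∫ w in A i, ‖f w‖ ∂μ := by
    have hr0 : (0:ℝ) ≤ 2 ^ (-(s + d)) := (rpow_pos_of_pos two_pos _).le
    have hr1 : (2:ℝ) ^ (-(s + d)) < 1 :=
      rpow_lt_one_of_one_lt_of_neg one_lt_two (by linarith)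
    refine Summable.of_nonneg_of_le
      (fun i => setIntegral_nonneg (hmeas i) (fun w _ => norm_nonneg _))
      (fun i => ?_)
      (((summable_geometric_of_lt_one hr0 hr1).mul_left ((2:ℝ) ^ |s| * V)))
    calc ∫ w in A i, ‖f w‖ ∂μ ≤ M i * (μ (A i)).toReal := hQ i
      _ ≤ M i * ((2:ℝ) ^ (-(i:ℝ)*(d:ℝ)) * V) := by
          refine mul_le_mul_of_nonneg_left (hvol i) ?_
          exact mul_nonneg (rpow_nonneg (by norm_num) _) (rpow_nonneg (by norm_num) _)
      _ = (2:ℝ) ^ |s| * V * ((2:ℝ) ^ (-(s+(d:ℝ)))) ^ i := by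
          simp only [hM]
          rw [← Real.rpow_natCast ((2:ℝ) ^ (-(s+(d:ℝ)))) i, ← Real.rpow_mul (by norm_num),
            ← Real.rpow_add two_pos]
          rw [show (2:ℝ) ^ (-(i:ℝ) * s + |s|) * ((2:ℝ) ^ (-(i:ℝ) * (d:ℝ)) * V)
              = (2:ℝ) ^ (-(i:ℝ) * s + |s|) * (2:ℝ) ^ (-(i:ℝ) * (d:ℝ)) * V from by ring,
            ← Real.rpow_add two_pos]
          rw [show -(i:ℝ) * s + |s| + -(i:ℝ) * (d:ℝ) = |s| + -(s + (d:ℝ)) * (i:ℝ) from by ring,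
            Real.rpow_add two_pos]
          ring
  have hU : IntegrableOn f (⋃ i, A i) μ :=
    integrableOn_iUnion_of_summable_integral_norm hint hsummable
  have hzero : IntegrableOn f ({0} : Set E) μ := by
    rw [IntegrableOn, Measure.restrict_eq_zero.mpr (measure_singleton 0)]
    exact integrable_zero_measure
  refine ((hU.union hzero).mono_set ?_)
  intro w hw
  rw [mem_ball_zero_iff] at hw
  rcases eq_or_ne w 0 with rfl | hw0
  · exact Or.inr rfl
  · left
    have hwpos : 0 < ‖w‖ := norm_pos_iff.mpr hw0
    have hex : ∃ n : ℕ, (2:ℝ) ^ (-(n:ℝ)-1) ≤ ‖w‖ := by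
      obtain ⟨n, hn⟩ := exists_pow_lt_of_lt_one hwpos (by norm_num : (1:ℝ)/2 < 1)
      refine ⟨n, le_of_lt ?_⟩
      have : ((1:ℝ)/2) ^ n = (2:ℝ) ^ (-(n:ℝ)) := by
        rw [Real.rpow_neg (by norm_num), Real.rpow_natCast]
        simp [one_div, inv_pow]
      calc (2:ℝ) ^ (-(n:ℝ)-1) ≤ (2:ℝ) ^ (-(n:ℝ)) :=
            rpow_le_rpow_of_exponent_le one_le_two (by linarith)
        _ < ‖w‖ := by rw [← this]; exact hn
    classical
    set i := Nat.find hex with hi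
    refine mem_iUnion.mpr ⟨i, Nat.find_spec hex, ?_⟩
    rcases Nat.eq_zero_or_pos i with h0 | hpos
    · rw [h0]
      simpa using hw
    · have := Nat.find_min hex (Nat.sub_lt hpos one_pos)
      push_neg at this
      calc ‖w‖ < (2:ℝ) ^ (-((i-1:ℕ):ℝ)-1) := by simpa using this
        _ = (2:ℝ) ^ (-(i:ℝ)) := by
            congr 1
            have : (((i-1:ℕ)):ℝ) = (i:ℝ) - 1 := by
              rw [Nat.cast_sub hpos]; norm_num
            rw [this]; ring

lemma aux_int (μ : Measure E) [μ.IsAddHaarMeasure] (d : ℕ) (hd : 1 ≤ d)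
    (hE : Module.finrank ℝ E = d) {α m : ℝ} (hα0 : 0 < α) (hα2 : α < 2)
    (hm0 : 0 ≤ m) (hmα : m < α) :
    Integrable (fun w : E => min 1 (‖w‖ ^ 2) * (1 + ‖w‖) ^ m * ‖w‖ ^ (-(d:ℝ) - α)) μ := by
  set g : E → ℝ := fun w => min 1 (‖w‖ ^ 2) * (1 + ‖w‖) ^ m * ‖w‖ ^ (-(d:ℝ) - α) with hg
  have hgm : Measurable g := by
    apply Measurable.mul
    apply Measurable.mul
    · exact measurable_const.min ((measurable_norm).pow measurable_const)
    · exact (measurable_const.add measurable_norm).pow_const m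
    · exact measurable_norm.pow_const _
  have hgnn : ∀ w, 0 ≤ g w := by
    intro w
    apply mul_nonneg (mul_nonneg (le_min zero_le_one (by positivity)) (by positivity))
    exact rpow_nonneg (norm_nonneg w) _
  set h1 : E → ℝ := (ball (0:E) 1).indicator
    (fun w => (2:ℝ) ^ m * ‖w‖ ^ (2 - (d:ℝ) - α)) with hh1
  set h2 : E → ℝ := fun w => (2:ℝ) ^ ((d:ℝ) + α) * (1 + ‖w‖) ^ (-((d:ℝ) + α - m)) with hh2
  have hint1 : Integrable h1 μ := by
    rw [hh1]
    refine (IntegrableOn.integrable_indicator ?_ measurableSet_ball)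
    exact ((aux_ball μ d hd hE (by linarith)).const_mul _)
  have hint2 : Integrable h2 μ := by
    refine (integrable_one_add_norm ?_).const_mul _
    rw [hE]; linarith
  refine Integrable.mono' (hint1.add hint2) hgm.aestronglyMeasurable ?_
  refine Filter.Eventually.of_forall (fun w => ?_)
  rw [Real.norm_of_nonneg (hgnn w)]
  have h1nn : 0 ≤ h1 w := by
    rw [hh1]
    apply Set.indicator_nonneg
    intro w _
    positivity
  have h2nn : 0 ≤ h2 w := by rw [hh2]; positivity
  rcases lt_or_ge ‖w‖ 1 with hw | hw
  · have hb : w ∈ ball (0:E) 1 := mem_ball_zero_iff.mpr hw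
    have key : g w ≤ (2:ℝ) ^ m * ‖w‖ ^ (2 - (d:ℝ) - α) := by
      rcases eq_or_ne w 0 with rfl | hw0
      · simp [hg]
        positivity
      · have hwpos : 0 < ‖w‖ := norm_pos_iff.mpr hw0
        have e1 : ‖w‖ ^ (2:ℕ) = ‖w‖ ^ (2:ℝ) := by
          rw [← Real.rpow_natCast ‖w‖ 2]; norm_num
        have : g w ≤ ‖w‖ ^ (2:ℝ) * (2:ℝ) ^ m * ‖w‖ ^ (-(d:ℝ) - α) := by
          apply mul_le_mul_of_nonneg_right _ (rpow_nonneg (norm_nonneg w) _)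
          apply mul_le_mul (by rw [← e1]; exact min_le_right _ _)
          · exact rpow_le_rpow (by positivity) (by linarith) hm0
          · positivity
          · positivity
        refine this.trans (le_of_eq ?_)
        rw [mul_comm (‖w‖ ^ (2:ℝ)) ((2:ℝ)^m), mul_assoc, ← Real.rpow_add hwpos]
        ring_nf
    calc g w ≤ (2:ℝ) ^ m * ‖w‖ ^ (2 - (d:ℝ) - α) := key
      _ = h1 w := by rw [hh1, Set.indicator_of_mem hb]
      _ ≤ h1 w + h2 w := le_add_of_nonneg_right h2nn
  · have hwpos : 0 < ‖w‖ := lt_of_lt_of_le one_pos hw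
    have key : g w ≤ h2 w := by
      have b1 : min 1 (‖w‖ ^ 2) ≤ 1 := min_le_left _ _
      have b3 : ‖w‖ ^ (-(d:ℝ) - α) ≤ ((1 + ‖w‖)/2) ^ (-(d:ℝ) - α) := by
        apply rpow_le_rpow_of_nonpos (by linarith) (by linarith)
          (by have : (0:ℝ) ≤ d := Nat.cast_nonneg d; linarith)
      have b4 : ((1 + ‖w‖)/2) ^ (-(d:ℝ) - α)
          = (2:ℝ) ^ ((d:ℝ) + α) * (1 + ‖w‖) ^ (-(d:ℝ) - α) := by
        rw [Real.div_rpow (by linarith) (by norm_num), div_eq_mul_inv,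
          ← Real.rpow_neg (by norm_num : (0:ℝ) ≤ 2)]
        rw [show -(-(d:ℝ) - α) = (d:ℝ) + α from by ring]
        ring
      calc g w ≤ 1 * (1 + ‖w‖) ^ m * ‖w‖ ^ (-(d:ℝ) - α) := by
            apply mul_le_mul_of_nonneg_right _ (rpow_nonneg (norm_nonneg w) _)
            exact mul_le_mul_of_nonneg_right b1 (by positivity)
        _ = (1 + ‖w‖) ^ m * ‖w‖ ^ (-(d:ℝ) - α) := by ring
        _ ≤ (1 + ‖w‖) ^ m * ((2:ℝ) ^ ((d:ℝ) + α) * (1 + ‖w‖) ^ (-(d:ℝ) - α)) := by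
            rw [← b4]
            exact mul_le_mul_of_nonneg_left b3 (by positivity)
        _ = (2:ℝ) ^ ((d:ℝ) + α) * ((1 + ‖w‖) ^ m * (1 + ‖w‖) ^ (-(d:ℝ) - α)) := by ring
        _ = h2 w := by
            rw [hh2, ← Real.rpow_add (by linarith : (0:ℝ) < 1 + ‖w‖)]
            rw [show m + (-(d:ℝ) - α) = -((d:ℝ) + α - m) from by ring]
    calc g w ≤ h2 w := key
      _ ≤ h1 w + h2 w := le_add_of_nonneg_left h1nn

end Aux

section Inner

variable {E : Type*} [NormedAddCommGroup E] [NormedSpace ℝ E] [MeasurableSpace E]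
  [BorelSpace E] [FiniteDimensional ℝ E]

set_option maxHeartbeats 1000000 in
lemma aux_inner (μ : Measure E) [μ.IsAddHaarMeasure] (d : ℕ) (hd : 1 ≤ d)
    (hE : Module.finrank ℝ E = d) (α p q : ℝ)
    (hα0 : 0 < α) (hα2 : α < 2)
    (hp0 : 0 ≤ p) (hpα : p < α) (hq0 : 0 ≤ q) (hqα : q < α)
    (W : E → E → ℝ)
    (hW : ∀ x y, W x y =
      if ‖x - y‖ < 1 then (1 + ‖x‖) ^ p + (1 + ‖y‖) ^ p
      else (1 + ‖x‖) ^ q + (1 + ‖y‖) ^ q)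
    (l : ℝ) (hl : 1 ≤ l) (x : E) (hx : ‖x‖ ≤ l) :
    (∫ y, min 1 (‖x - y‖ ^ 2 / l ^ 2) * W x y * ‖x - y‖ ^ (-(d:ℝ) - α) ∂μ)
      ≤ (2:ℝ) ^ (p+1) * (1 + ‖x‖) ^ p / l ^ 2
          * (∫ w in ball (0 : E) 1, ‖w‖ ^ (2 - (d:ℝ) - α) ∂μ)
        + (2:ℝ) ^ (q+1) * (∫ w : E,
            min 1 (‖w‖ ^ 2) * (1 + ‖w‖) ^ q * ‖w‖ ^ (-(d:ℝ) - α) ∂μ) := by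
  have hl0 : (0:ℝ) < l := lt_of_lt_of_le one_pos hl
  set K1 : ℝ := ∫ w in ball (0:E) 1, ‖w‖ ^ (2 - (d:ℝ) - α) ∂μ with hK1
  set K2 : ℝ := ∫ w : E, min 1 (‖w‖ ^ 2) * (1 + ‖w‖) ^ q * ‖w‖ ^ (-(d:ℝ) - α) ∂μ with hK2
  have hK2nn : 0 ≤ K2 := integral_nonneg (fun w => by
    apply mul_nonneg (mul_nonneg (le_min zero_le_one (by positivity)) (by positivity))
    exact rpow_nonneg (norm_nonneg w) _)
  set cA : ℝ := (2:ℝ) ^ (p+1) * (1 + ‖x‖) ^ p / l ^ 2 with hcA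
  have hcAnn : 0 ≤ cA := by rw [hcA]; positivity
  set φA : E → ℝ := (ball (0:E) 1).indicator (fun w => cA * ‖w‖ ^ (2 - (d:ℝ) - α)) with hφA
  set φB : E → ℝ := fun w =>
    2 * min 1 (‖w‖ ^ 2 / l ^ 2) * (1 + l + ‖w‖) ^ q * ‖w‖ ^ (-(d:ℝ) - α) with hφB
  have hφAnn : ∀ w, 0 ≤ φA w := by
    intro w
    apply Set.indicator_nonneg
    intro w _
    apply mul_nonneg hcAnn (rpow_nonneg (norm_nonneg _) _)
  have hφBnn : ∀ w, 0 ≤ φB w := by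
    intro w
    apply mul_nonneg (mul_nonneg (mul_nonneg zero_le_two ?_) (by positivity))
      (rpow_nonneg (norm_nonneg _) _)
    exact le_min zero_le_one (by positivity)
  have hφBm : Measurable φB := by
    apply Measurable.mul
    apply Measurable.mul
    · exact (measurable_const.min (((measurable_norm).pow measurable_const).div
        measurable_const)).const_mul 2
    · exact ((measurable_norm.const_add (1 + l))).pow_const q
    · exact measurable_norm.pow_const _
  have hφA_int : Integrable φA μ := by
    rw [hφA]
    exact IntegrableOn.integrable_indicator
      ((aux_ball μ d hd hE (by linarith)).const_mul cA) measurableSet_ball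
  have hIA : ∫ w, φA w ∂μ = cA * K1 := by
    rw [hφA, integral_indicator measurableSet_ball, hK1, integral_const_mul]
  have hgq := aux_int μ d hd hE hα0 hα2 hq0 hqα
  have hφB_le : ∀ w : E, φB w ≤ 2 * (1+l) ^ q *
      (min 1 (‖w‖ ^ 2) * (1 + ‖w‖) ^ q * ‖w‖ ^ (-(d:ℝ) - α)) := by
    intro w
    have b1 : min 1 (‖w‖ ^ 2 / l ^ 2) ≤ min 1 (‖w‖ ^ 2) := by
      apply min_le_min le_rfl
      apply div_le_self (by positivity)
      nlinarith [sq_nonneg (l-1), hl]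
    have b2 : (1 + l + ‖w‖) ^ q ≤ (1+l) ^ q * (1 + ‖w‖) ^ q := by
      rw [← Real.mul_rpow (by linarith) (by positivity)]
      apply rpow_le_rpow (by positivity) (by nlinarith [norm_nonneg w]) hq0
    calc φB w ≤ 2 * min 1 (‖w‖ ^ 2) * ((1+l) ^ q * (1 + ‖w‖) ^ q) * ‖w‖ ^ (-(d:ℝ) - α) := by
          apply mul_le_mul_of_nonneg_right _ (rpow_nonneg (norm_nonneg _) _)
          apply mul_le_mul (by
            apply mul_le_mul_of_nonneg_left b1 zero_le_two) b2 (by positivity)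
          · positivity
      _ = 2 * (1+l) ^ q * (min 1 (‖w‖ ^ 2) * (1 + ‖w‖) ^ q * ‖w‖ ^ (-(d:ℝ) - α)) := by ring
  have hφB_int : Integrable φB μ := by
    refine Integrable.mono' (hgq.const_mul (2 * (1+l) ^ q)) hφBm.aestronglyMeasurable ?_
    refine Filter.Eventually.of_forall (fun w => ?_)
    rw [Real.norm_of_nonneg (hφBnn w)]
    exact hφB_le w
  have hIB : ∫ w, φB w ∂μ ≤ (2:ℝ) ^ (q+1) * K2 := by
    have hcs := Measure.integral_comp_smul μ φB l
    rw [hE] at hcs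
    have habs : |((l ^ d : ℝ))⁻¹| = (l ^ d)⁻¹ := abs_of_pos (by positivity)
    rw [habs, smul_eq_mul] at hcs
    have h5 : ∫ w, φB w ∂μ = l ^ d * ∫ u, φB (l • u) ∂μ := by
      rw [hcs]
      field_simp
    have hptw : ∀ u : E, φB (l • u) ≤ (2:ℝ) ^ (q+1) * l ^ (q - (d:ℝ) - α) *
        (min 1 (‖u‖ ^ 2) * (1 + ‖u‖) ^ q * ‖u‖ ^ (-(d:ℝ) - α)) := by
      intro u
      have hnorm : ‖l • u‖ = l * ‖u‖ := by
        rw [norm_smul, Real.norm_eq_abs, abs_of_pos hl0]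
      have t1 : min 1 (‖l • u‖ ^ 2 / l ^ 2) = min 1 (‖u‖ ^ 2) := by
        congr 1
        rw [hnorm, mul_pow, mul_comm (l ^ 2), mul_div_assoc, div_self (by positivity), mul_one]
      have t2 : (1 + l + ‖l • u‖) ^ q ≤ (2:ℝ) ^ q * l ^ q * (1 + ‖u‖) ^ q := by
        rw [hnorm, ← Real.mul_rpow (by norm_num) (le_of_lt hl0),
          ← Real.mul_rpow (by positivity) (by positivity)]
        apply rpow_le_rpow (by positivity) (by nlinarith [norm_nonneg u]) hq0
      have t3 : ‖l • u‖ ^ (-(d:ℝ) - α) = l ^ (-(d:ℝ) - α) * ‖u‖ ^ (-(d:ℝ) - α) := by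
        rw [hnorm, Real.mul_rpow (le_of_lt hl0) (norm_nonneg u)]
      calc φB (l • u)
          = 2 * min 1 (‖u‖ ^ 2) * (1 + l + ‖l • u‖) ^ q
            * (l ^ (-(d:ℝ) - α) * ‖u‖ ^ (-(d:ℝ) - α)) := by
            rw [hφB]; dsimp only; rw [t1, t3]
        _ ≤ 2 * min 1 (‖u‖ ^ 2) * ((2:ℝ) ^ q * l ^ q * (1 + ‖u‖) ^ q)
            * (l ^ (-(d:ℝ) - α) * ‖u‖ ^ (-(d:ℝ) - α)) := by
            apply mul_le_mul_of_nonneg_right _ (by positivity)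
            apply mul_le_mul_of_nonneg_left t2
            apply mul_nonneg zero_le_two (le_min zero_le_one (by positivity))
        _ = (2 * (2:ℝ) ^ q) * (l ^ q * l ^ (-(d:ℝ) - α)) *
            (min 1 (‖u‖ ^ 2) * (1 + ‖u‖) ^ q * ‖u‖ ^ (-(d:ℝ) - α)) := by ring
        _ = (2:ℝ) ^ (q+1) * l ^ (q - (d:ℝ) - α) *
            (min 1 (‖u‖ ^ 2) * (1 + ‖u‖) ^ q * ‖u‖ ^ (-(d:ℝ) - α)) := by
            rw [Real.rpow_add_one two_ne_zero q, ← Real.rpow_add hl0]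
            ring_nf
    have hmono : ∫ u, φB (l • u) ∂μ ≤ (2:ℝ) ^ (q+1) * l ^ (q - (d:ℝ) - α) * K2 := by
      have := integral_mono_of_nonneg (μ := μ)
        (f := fun u => φB (l • u))
        (g := fun u => (2:ℝ) ^ (q+1) * l ^ (q - (d:ℝ) - α) *
          (min 1 (‖u‖ ^ 2) * (1 + ‖u‖) ^ q * ‖u‖ ^ (-(d:ℝ) - α)))
        (Filter.Eventually.of_forall (fun u => hφBnn _))
        (hgq.const_mul _)
        (Filter.Eventually.of_forall hptw)
      rwa [integral_const_mul] at this
    calc ∫ w, φB w ∂μ = l ^ d * ∫ u, φB (l • u) ∂μ := h5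
      _ ≤ l ^ d * ((2:ℝ) ^ (q+1) * l ^ (q - (d:ℝ) - α) * K2) := by
          apply mul_le_mul_of_nonneg_left hmono (by positivity)
      _ = (2:ℝ) ^ (q+1) * K2 * (l ^ (d:ℝ) * l ^ (q - (d:ℝ) - α)) := by
          rw [← Real.rpow_natCast l d]; ring
      _ = (2:ℝ) ^ (q+1) * K2 * l ^ (q - α) := by
          rw [← Real.rpow_add hl0]; ring_nf
      _ ≤ (2:ℝ) ^ (q+1) * K2 * 1 := by
          apply mul_le_mul_of_nonneg_left
            (rpow_le_one_of_one_le_of_nonpos hl (by linarith)) (by positivity)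
      _ = (2:ℝ) ^ (q+1) * K2 := by ring
  have hdom : ∀ y : E, min 1 (‖x - y‖ ^ 2 / l ^ 2) * W x y * ‖x - y‖ ^ (-(d:ℝ) - α)
      ≤ φA (x - y) + φB (x - y) := by
    intro y
    rcases lt_or_ge ‖x - y‖ 1 with hxy | hxy
    · have hWxy : W x y = (1 + ‖x‖) ^ p + (1 + ‖y‖) ^ p := by rw [hW x y, if_pos hxy]
      have hyx : ‖y‖ ≤ ‖x‖ + ‖x - y‖ := by
        calc ‖y‖ = ‖x - (x - y)‖ := by congr 1; abel
        _ ≤ ‖x‖ + ‖x - y‖ := norm_sub_le _ _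
      have hWb : W x y ≤ (2:ℝ) ^ (p+1) * (1 + ‖x‖) ^ p := by
        rw [hWxy]
        have b1 : (1 + ‖y‖) ^ p ≤ (2:ℝ) ^ p * (1 + ‖x‖) ^ p := by
          rw [← Real.mul_rpow (by norm_num) (by positivity)]
          apply rpow_le_rpow (by positivity) (by nlinarith [norm_nonneg x]) hp0
        have b2 : (1 + ‖x‖) ^ p ≤ (2:ℝ) ^ p * (1 + ‖x‖) ^ p := by
          apply le_mul_of_one_le_left (by positivity)
          exact Real.one_le_rpow one_le_two hp0
        rw [Real.rpow_add_one two_ne_zero p]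
        nlinarith [rpow_nonneg (by positivity : (0:ℝ) ≤ 1 + ‖x‖) p]
      have hmin : min 1 (‖x - y‖ ^ 2 / l ^ 2) = ‖x - y‖ ^ 2 / l ^ 2 := by
        apply min_eq_right
        apply div_le_one_of_le₀ (by nlinarith [norm_nonneg (x - y), sq_nonneg (l-1)])
          (by positivity)
      have hmem : x - y ∈ ball (0:E) 1 := mem_ball_zero_iff.mpr hxy
      have key : min 1 (‖x - y‖ ^ 2 / l ^ 2) * W x y * ‖x - y‖ ^ (-(d:ℝ) - α)
          ≤ φA (x - y) := by
        rw [hφA, Set.indicator_of_mem hmem, hmin]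
        rcases eq_or_ne (x - y) 0 with h0 | h0
        · rw [h0]
          simp only [norm_zero]
          rw [Real.zero_rpow (show -(d:ℝ) - α ≠ 0 from by
            have : (0:ℝ) ≤ d := Nat.cast_nonneg d
            intro h; nlinarith), mul_zero]
          exact mul_nonneg hcAnn (rpow_nonneg le_rfl _)
        · have hwpos : 0 < ‖x - y‖ := norm_pos_iff.mpr h0
          have e1 : ‖x - y‖ ^ (2:ℕ) * ‖x - y‖ ^ (-(d:ℝ) - α) = ‖x - y‖ ^ (2 - (d:ℝ) - α) := by
            rw [← Real.rpow_natCast ‖x-y‖ 2, ← Real.rpow_add hwpos]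
            norm_num
            ring_nf
          calc ‖x - y‖ ^ 2 / l ^ 2 * W x y * ‖x - y‖ ^ (-(d:ℝ) - α)
              ≤ ‖x - y‖ ^ 2 / l ^ 2 * ((2:ℝ) ^ (p+1) * (1 + ‖x‖) ^ p)
                * ‖x - y‖ ^ (-(d:ℝ) - α) := by
                apply mul_le_mul_of_nonneg_right _ (rpow_nonneg (norm_nonneg _) _)
                apply mul_le_mul_of_nonneg_left hWb (by positivity)
            _ = cA * (‖x - y‖ ^ (2:ℕ) * ‖x - y‖ ^ (-(d:ℝ) - α)) := by
                rw [hcA]; ring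
            _ = cA * ‖x - y‖ ^ (2 - (d:ℝ) - α) := by rw [e1]
      exact key.trans (le_add_of_nonneg_right (hφBnn _))
    · have hWxy : W x y = (1 + ‖x‖) ^ q + (1 + ‖y‖) ^ q := by
        rw [hW x y, if_neg (not_lt.mpr hxy)]
      have hyx : ‖y‖ ≤ ‖x‖ + ‖x - y‖ := by
        calc ‖y‖ = ‖x - (x - y)‖ := by congr 1; abel
        _ ≤ ‖x‖ + ‖x - y‖ := norm_sub_le _ _
      have hWb : W x y ≤ 2 * (1 + l + ‖x - y‖) ^ q := by
        rw [hWxy, two_mul]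
        apply add_le_add
        · apply rpow_le_rpow (by positivity) (by nlinarith [norm_nonneg (x - y)]) hq0
        · apply rpow_le_rpow (by positivity) (by nlinarith) hq0
      have key : min 1 (‖x - y‖ ^ 2 / l ^ 2) * W x y * ‖x - y‖ ^ (-(d:ℝ) - α)
          ≤ φB (x - y) := by
        rw [hφB]
        dsimp only
        rw [show 2 * min 1 (‖x - y‖ ^ 2 / l ^ 2) * (1 + l + ‖x - y‖) ^ q
            * ‖x - y‖ ^ (-(d:ℝ) - α)
            = min 1 (‖x - y‖ ^ 2 / l ^ 2) * (2 * (1 + l + ‖x - y‖) ^ q)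
              * ‖x - y‖ ^ (-(d:ℝ) - α) from by ring]
        apply mul_le_mul_of_nonneg_right _ (rpow_nonneg (norm_nonneg _) _)
        apply mul_le_mul_of_nonneg_left hWb
        exact le_min zero_le_one (by positivity)
      exact key.trans (le_add_of_nonneg_left (hφAnn _))
  have hnn : ∀ y : E, 0 ≤ min 1 (‖x - y‖ ^ 2 / l ^ 2) * W x y * ‖x - y‖ ^ (-(d:ℝ) - α) := by
    intro y
    have hWnn : 0 ≤ W x y := by
      rw [hW x y]
      split <;> positivity
    apply mul_nonneg (mul_nonneg (le_min zero_le_one (by positivity)) hWnn)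
    exact rpow_nonneg (norm_nonneg _) _
  have hcomp : Integrable (fun y : E => φA (x - y) + φB (x - y)) μ :=
    ((hφA_int.add hφB_int).comp_sub_left x)
  have hmain := integral_mono_of_nonneg (μ := μ)
    (f := fun y : E => min 1 (‖x - y‖ ^ 2 / l ^ 2) * W x y * ‖x - y‖ ^ (-(d:ℝ) - α))
    (g := fun y : E => φA (x - y) + φB (x - y))
    (Filter.Eventually.of_forall hnn) hcomp (Filter.Eventually.of_forall hdom)
  refine hmain.trans ?_
  have hshift := integral_sub_left_eq_self (fun w => φA w + φB w) μ x
  rw [hshift, integral_add hφA_int hφB_int, hIA]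
  exact add_le_add_right hIB _

end Inner


set_option maxHeartbeats 1000000 in
theorem stmt_18 (d : ℕ) (hd : 1 ≤ d) (α p q : ℝ)
    (hα0 : 0 < α) (hα2 : α < 2)
    (hp0 : 0 ≤ p) (hpα : p < α) (hq0 : 0 ≤ q) (hqα : q < α)
    (W : EuclideanSpace ℝ (Fin d) → EuclideanSpace ℝ (Fin d) → ℝ)
    (hW : ∀ x y, W x y =
      if ‖x - y‖ < 1 then (1 + ‖x‖) ^ p + (1 + ‖y‖) ^ p
      else (1 + ‖x‖) ^ q + (1 + ‖y‖) ^ q) :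
    (∃ c > 0, ∀ l : ℝ, 1 ≤ l →
      (∫ x in {x : EuclideanSpace ℝ (Fin d) | ‖x‖ ≤ l},
        ∫ y, min 1 (‖x - y‖ ^ 2 / l ^ 2) * W x y * ‖x - y‖ ^ (-(d:ℝ) - α))
        ≤ c * (l ^ (d:ℝ) + l ^ ((d:ℝ) + p - α)))
    ∧ ∃ M : ℝ, ∀ L ≥ (1:ℝ), ∃ l ≥ L,
        l ^ (-(d:ℝ)) *
          (∫ x in {x : EuclideanSpace ℝ (Fin d) | ‖x‖ ≤ l},
            ∫ y, min 1 (‖x - y‖ ^ 2 / l ^ 2) * W x y * ‖x - y‖ ^ (-(d:ℝ) - α)) ≤ M := by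
  have hE : Module.finrank ℝ (EuclideanSpace ℝ (Fin d)) = d := finrank_euclideanSpace_fin
  set K1 : ℝ := ∫ w in ball (0 : EuclideanSpace ℝ (Fin d)) 1, ‖w‖ ^ (2 - (d:ℝ) - α) with hK1
  set K2 : ℝ := ∫ w : EuclideanSpace ℝ (Fin d),
      min 1 (‖w‖ ^ 2) * (1 + ‖w‖) ^ q * ‖w‖ ^ (-(d:ℝ) - α) with hK2
  set V : ℝ := (volume (ball (0 : EuclideanSpace ℝ (Fin d)) 1)).toReal with hV
  have hK1nn : 0 ≤ K1 := setIntegral_nonneg measurableSet_ball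
    (fun w _ => rpow_nonneg (norm_nonneg w) _)
  have hK2nn : 0 ≤ K2 := integral_nonneg (fun w => by
    apply mul_nonneg (mul_nonneg (le_min zero_le_one (by positivity)) (by positivity))
    exact rpow_nonneg (norm_nonneg w) _)
  have hVnn : 0 ≤ V := ENNReal.toReal_nonneg
  set c : ℝ := (2:ℝ) ^ (2*p+1) * K1 * V + (2:ℝ) ^ (q+1) * K2 * V + 1 with hc
  have hc1 : (2:ℝ) ^ (2*p+1) * K1 * V ≤ c ∧ (2:ℝ) ^ (q+1) * K2 * V ≤ c ∧ 0 < c := by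
    have t1 : 0 ≤ (2:ℝ) ^ (2*p+1) * K1 * V := by positivity
    have t2 : 0 ≤ (2:ℝ) ^ (q+1) * K2 * V := by positivity
    refine ⟨by rw [hc]; linarith, by rw [hc]; linarith, by rw [hc]; linarith⟩
  have hmain : ∀ l : ℝ, 1 ≤ l →
      (∫ x in {x : EuclideanSpace ℝ (Fin d) | ‖x‖ ≤ l},
        ∫ y, min 1 (‖x - y‖ ^ 2 / l ^ 2) * W x y * ‖x - y‖ ^ (-(d:ℝ) - α))
        ≤ c * (l ^ (d:ℝ) + l ^ ((d:ℝ) + p - α)) := by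
    intro l hl
    have hl0 : (0:ℝ) < l := lt_of_lt_of_le one_pos hl
    have hSeq : {x : EuclideanSpace ℝ (Fin d) | ‖x‖ ≤ l} = closedBall (0:EuclideanSpace ℝ (Fin d)) l := by
      ext x
      simp [mem_closedBall_zero_iff]
    set D : ℝ := (2:ℝ) ^ (p+1) * (2*l) ^ p / l ^ 2 * K1 + (2:ℝ) ^ (q+1) * K2 with hD
    have hI_nonneg : ∀ x : EuclideanSpace ℝ (Fin d),
        0 ≤ ∫ y, min 1 (‖x - y‖ ^ 2 / l ^ 2) * W x y * ‖x - y‖ ^ (-(d:ℝ) - α) := by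
      intro x
      apply integral_nonneg
      intro y
      have hWnn : 0 ≤ W x y := by rw [hW x y]; split <;> positivity
      apply mul_nonneg (mul_nonneg (le_min zero_le_one (by positivity)) hWnn)
      exact rpow_nonneg (norm_nonneg _) _
    have hIx : ∀ x : EuclideanSpace ℝ (Fin d), ‖x‖ ≤ l →
        (∫ y, min 1 (‖x - y‖ ^ 2 / l ^ 2) * W x y * ‖x - y‖ ^ (-(d:ℝ) - α)) ≤ D := by
      intro x hx
      refine (aux_inner volume d hd hE α p q hα0 hα2 hp0 hpα hq0 hqα W hW l hl x hx).trans ?_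
      rw [hD]
      apply add_le_add_left
      apply mul_le_mul_of_nonneg_right _ hK1nn
      apply div_le_div_of_nonneg_right _ (by positivity)
      apply mul_le_mul_of_nonneg_left _ (by positivity)
      exact rpow_le_rpow (by positivity) (by linarith [norm_nonneg x]) hp0
    -- outer integral
    have hSmeas : MeasurableSet {x : EuclideanSpace ℝ (Fin d) | ‖x‖ ≤ l} := by
      rw [hSeq]; exact measurableSet_closedBall
    have hSfin : volume {x : EuclideanSpace ℝ (Fin d) | ‖x‖ ≤ l} < ⊤ := by
      rw [hSeq]; exact measure_closedBall_lt_top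
    have houter : (∫ x in {x : EuclideanSpace ℝ (Fin d) | ‖x‖ ≤ l},
        ∫ y, min 1 (‖x - y‖ ^ 2 / l ^ 2) * W x y * ‖x - y‖ ^ (-(d:ℝ) - α))
        ≤ D * (volume {x : EuclideanSpace ℝ (Fin d) | ‖x‖ ≤ l}).toReal := by
      have hmono := integral_mono_of_nonneg
        (μ := (volume : Measure (EuclideanSpace ℝ (Fin d))).restrict
          {x : EuclideanSpace ℝ (Fin d) | ‖x‖ ≤ l})
        (f := fun x => ∫ y, min 1 (‖x - y‖ ^ 2 / l ^ 2) * W x y * ‖x - y‖ ^ (-(d:ℝ) - α))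
        (g := fun _ => D)
        (Filter.Eventually.of_forall hI_nonneg)
        (integrableOn_const (C := D) hSfin.ne)
        ?_
      · refine hmono.trans ?_
        rw [setIntegral_const, smul_eq_mul, mul_comm, measureReal_def]
      · filter_upwards [ae_restrict_mem hSmeas] with x hx
        exact hIx x hx
    have hvolS : (volume {x : EuclideanSpace ℝ (Fin d) | ‖x‖ ≤ l}).toReal = l ^ d * V := by
      rw [hSeq, Measure.addHaar_closedBall volume _ hl0.le, hE, ENNReal.toReal_mul,
        ENNReal.toReal_ofReal (by positivity), hV]
    -- final arithmetic
    have harith : D * (l ^ d * V) ≤ c * (l ^ (d:ℝ) + l ^ ((d:ℝ) + p - α)) := by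
      have e1 : D * (l ^ d * V)
          = (2:ℝ) ^ (2*p+1) * K1 * V * (l ^ p / l ^ 2 * l ^ (d:ℝ))
            + (2:ℝ) ^ (q+1) * K2 * V * l ^ (d:ℝ) := by
        rw [hD, ← Real.rpow_natCast l d,
          Real.mul_rpow (by norm_num) hl0.le,
          show (2:ℝ) ^ (2*p+1) = (2:ℝ) ^ (p+1) * (2:ℝ) ^ p from by
            rw [← Real.rpow_add two_pos]; ring_nf]
        ring
      have e2 : l ^ p / l ^ 2 * l ^ (d:ℝ) = l ^ (p - 2 + (d:ℝ)) := by
        rw [show (l:ℝ) ^ (2:ℕ) = l ^ (2:ℝ) from by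
          rw [← Real.rpow_natCast l 2]; norm_num,
          ← Real.rpow_sub hl0, ← Real.rpow_add hl0]
      have e3 : l ^ (p - 2 + (d:ℝ)) ≤ l ^ ((d:ℝ) + p - α) :=
        rpow_le_rpow_of_exponent_le hl (by linarith)
      calc D * (l ^ d * V)
          = (2:ℝ) ^ (2*p+1) * K1 * V * (l ^ (p - 2 + (d:ℝ)))
            + (2:ℝ) ^ (q+1) * K2 * V * l ^ (d:ℝ) := by rw [e1, e2]
        _ ≤ c * l ^ ((d:ℝ) + p - α) + c * l ^ (d:ℝ) := by
            apply add_le_add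
            · calc (2:ℝ) ^ (2*p+1) * K1 * V * (l ^ (p - 2 + (d:ℝ)))
                  ≤ (2:ℝ) ^ (2*p+1) * K1 * V * l ^ ((d:ℝ) + p - α) := by
                    apply mul_le_mul_of_nonneg_left e3 (by positivity)
                _ ≤ c * l ^ ((d:ℝ) + p - α) := by
                    apply mul_le_mul_of_nonneg_right hc1.1 (rpow_nonneg hl0.le _)
            · apply mul_le_mul_of_nonneg_right hc1.2.1 (rpow_nonneg hl0.le _)
        _ = c * (l ^ (d:ℝ) + l ^ ((d:ℝ) + p - α)) := by ring
    refine houter.trans ?_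
    rw [hvolS]
    exact harith
  constructor
  · exact ⟨c, hc1.2.2, hmain⟩
  · refine ⟨2 * c, fun L hL => ⟨L, le_refl L, ?_⟩⟩
    have hL0 : (0:ℝ) < L := lt_of_lt_of_le one_pos hL
    have h1 := hmain L hL
    have h2 : L ^ (-(d:ℝ)) * (∫ x in {x : EuclideanSpace ℝ (Fin d) | ‖x‖ ≤ L},
          ∫ y, min 1 (‖x - y‖ ^ 2 / L ^ 2) * W x y * ‖x - y‖ ^ (-(d:ℝ) - α))
        ≤ L ^ (-(d:ℝ)) * (c * (L ^ (d:ℝ) + L ^ ((d:ℝ) + p - α))) :=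
      mul_le_mul_of_nonneg_left h1 (rpow_nonneg hL0.le _)
    refine h2.trans ?_
    have e4 : L ^ (-(d:ℝ)) * (c * (L ^ (d:ℝ) + L ^ ((d:ℝ) + p - α)))
        = c * (L ^ (-(d:ℝ) + (d:ℝ)) + L ^ (-(d:ℝ) + ((d:ℝ) + p - α))) := by
      rw [Real.rpow_add hL0, Real.rpow_add hL0]
      ring
    rw [e4]
    have e5 : L ^ (-(d:ℝ) + (d:ℝ)) = 1 := by
      rw [show -(d:ℝ) + (d:ℝ) = 0 from by ring, Real.rpow_zero]
    have e6 : L ^ (-(d:ℝ) + ((d:ℝ) + p - α)) ≤ 1 := by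
      rw [show -(d:ℝ) + ((d:ℝ) + p - α) = p - α from by ring]
      exact rpow_le_one_of_one_le_of_nonpos hL (by linarith)
    rw [e5]
    nlinarith [hc1.2.2]
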